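/- Let X be a k-dimensional simplicial complex on a finite vertex set V with n vertices and Z_{k−1}(X;ℝ) ≠ {0}. Then for every f ∈ C^{k−1}(X;ℝ) with f ∉ B^{k−1}(X;ℝ) (f being also a (k−1)-cochain of the completion K(X), which has the same (k−1)-faces as X): λ(X)·⟨L^up_{k−1}(K(X))f, f⟩ ≤ n·⟨L^up_{k−1}(X)f, f⟩. -/

import Mathlib

open Finset

namespace HigherCheeger

variable {V : Type*} [DecidableEq V] [Fintype V] [LinearOrder V]

/-- An abstract simplicial complex: a family of finite subsets of `V`
closed under taking subsets. -/
def IsComplex (X : Finset (Finset V)) : Prop :=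
  ∀ σ ∈ X, ∀ τ ⊆ σ, τ ∈ X

/-- `X` is `k`-dimensional: every face has at most `k+1` vertices
and some face has exactly `k+1` vertices. -/
def IsDim (X : Finset (Finset V)) (k : ℕ) : Prop :=
  (∀ σ ∈ X, σ.card ≤ k + 1) ∧ ∃ σ ∈ X, σ.card = k + 1

/-- The faces of `X` of cardinality `c` (i.e. of dimension `c - 1`). -/
def faces (X : Finset (Finset V)) (c : ℕ) : Finset (Finset V) :=
  X.filter fun σ => σ.card = c

/-- `X` has complete `(k-1)`-skeleton: every subset of `V` of size at most `k` is a face. -/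
def CompleteSkeleton (X : Finset (Finset V)) (k : ℕ) : Prop :=
  ∀ σ : Finset V, σ.card ≤ k → σ ∈ X

/-- The `k`-dimensional completion `K(X)`. -/
def completion (X : Finset (Finset V)) (k : ℕ) : Finset (Finset V) :=
  X ∪ (Finset.univ.filter fun τ : Finset V => τ.card = k + 1 ∧ ∀ v ∈ τ, τ.erase v ∈ X)

/-- The complete `k`-dimensional complex `K_n^k` on the vertex set `V`. -/
def completeComplex (V : Type*) [DecidableEq V] [Fintype V] (k : ℕ) : Finset (Finset V) :=
  Finset.univ.filter fun σ : Finset V => σ.card ≤ k + 1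

/-- The oriented incidence number `[τ:σ]` (with respect to the linear order on `V`):
`(-1)^j` if `σ = τ \ {v_j}` where `v_j` is the `j`-th smallest vertex of `τ`, and `0` otherwise. -/
def incidence (τ σ : Finset V) : ℝ :=
  if σ ⊆ τ ∧ σ.card + 1 = τ.card then
    ∑ v ∈ τ \ σ, (-1 : ℝ) ^ (τ.filter fun w => w < v).card
  else 0

/-- The real coboundary operator `δ` applied to a cochain living on the faces of
cardinality `c`; the result lives on faces of cardinality `c + 1`. -/
def delta (X : Finset (Finset V)) (c : ℕ) (f : Finset V → ℝ) : Finset V → ℝ :=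
  fun τ => ∑ σ ∈ faces X c, incidence τ σ * f σ

/-- The real boundary operator `∂` (the adjoint of `δ`) applied to a cochain living
on the faces of cardinality `c`; the result lives on faces of cardinality `c - 1`. -/
def bdry (X : Finset (Finset V)) (c : ℕ) (f : Finset V → ℝ) : Finset V → ℝ :=
  fun σ => ∑ τ ∈ faces X c, incidence τ σ * f τ

/-- The inner product of two cochains on the faces of cardinality `c`. -/
def inn (X : Finset (Finset V)) (c : ℕ) (f g : Finset V → ℝ) : ℝ :=
  ∑ σ ∈ faces X c, f σ * g σ

/-- The upper Laplacian `L^up_{k-1} = ∂_k δ_{k-1}` acting on `(k-1)`-cochains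
(functions on faces of cardinality `k`). -/
def lapUp (X : Finset (Finset V)) (k : ℕ) (f : Finset V → ℝ) : Finset V → ℝ :=
  bdry X (k + 1) (delta X k f)

/-- The lower Laplacian `L^down_{k-1} = δ_{k-2} ∂_{k-1}` acting on `(k-1)`-cochains. -/
def lapDown (X : Finset (Finset V)) (k : ℕ) (f : Finset V → ℝ) : Finset V → ℝ :=
  delta X (k - 1) (bdry X k f)

/-- `f ∈ Z_{k-1}(X;ℝ) = ker ∂_{k-1}`. -/
def IsCycle (X : Finset (Finset V)) (k : ℕ) (f : Finset V → ℝ) : Prop :=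
  ∀ σ : Finset V, bdry X k f σ = 0

/-- `f ∈ B^{k-1}(X;ℝ) = im δ_{k-2}` (as a cochain, i.e. on the `(k-1)`-faces). -/
def IsCobdry (X : Finset (Finset V)) (k : ℕ) (f : Finset V → ℝ) : Prop :=
  ∃ g : Finset V → ℝ, ∀ σ ∈ faces X k, f σ = delta X (k - 1) g σ

/-- The spectral gap `λ(X)`: the minimum of the Rayleigh quotient
`⟨L^up_{k-1}(X) f, f⟩ / ⟨f, f⟩` over nonzero `f ∈ Z_{k-1}(X;ℝ)`. -/
noncomputable def spectralGap (X : Finset (Finset V)) (k : ℕ) : ℝ :=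
  sInf {r : ℝ | ∃ f : Finset V → ℝ, IsCycle X k f ∧ inn X k f f ≠ 0 ∧
    r = inn X k (lapUp X k f) f / inn X k f f}

/-- A partition of `V` into `m` (nonempty) parts. -/
def IsPartition {m : ℕ} (A : Fin m → Finset V) : Prop :=
  (∀ i, (A i).Nonempty) ∧ ∀ v : V, ∃! i, v ∈ A i

/-- The linear order on `V` is adapted to the family of parts `A`. -/
def OrderAdapted {m : ℕ} (A : Fin m → Finset V) : Prop :=
  ∀ i j : Fin m, i < j → ∀ v ∈ A i, ∀ w ∈ A j, v < w

/-- `F(A_0,…,A_k)`: the `k`-faces of `X` with exactly one vertex in each part. -/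
def Fset (X : Finset (Finset V)) (k : ℕ) (A : Fin (k + 1) → Finset V) : Finset (Finset V) :=
  (faces X (k + 1)).filter fun τ => ∀ i, (τ ∩ A i).card = 1

/-- `F^∂(A_0,…,A_k)`: the `(k+1)`-element members of `K(X)` with exactly one vertex
in each part. -/
def Fpar (X : Finset (Finset V)) (k : ℕ) (A : Fin (k + 1) → Finset V) : Finset (Finset V) :=
  (faces (completion X k) (k + 1)).filter fun τ => ∀ i, (τ ∩ A i).card = 1

/-- The value `|V|·|F(A_0,…,A_k)| / |F^∂(A_0,…,A_k)|` of a partition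
(`⊤` if the denominator is `0`). -/
noncomputable def cheegerVal (X : Finset (Finset V)) (k : ℕ) (A : Fin (k + 1) → Finset V) :
    EReal :=
  if (Fpar X k A).card = 0 then ⊤
  else (((Fintype.card V * (Fset X k A).card : ℝ) / ((Fpar X k A).card : ℝ) : ℝ) : EReal)

/-- The Cheeger constant `h(X)`. -/
noncomputable def cheeger (X : Finset (Finset V)) (k : ℕ) : EReal :=
  sInf {r : EReal | ∃ A : Fin (k + 1) → Finset V, IsPartition A ∧ r = cheegerVal X k A}

/-- `d(σ)`: the number of members of `F^∂(A_0,…,A_k)` containing `σ`. -/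
def degPar (X : Finset (Finset V)) (k : ℕ) (A : Fin (k + 1) → Finset V) (σ : Finset V) : ℕ :=
  ((Fpar X k A).filter fun τ => σ ⊆ τ).card

/-- `C(X)` (with respect to the partition `A`):
the maximum over `τ ∈ F^∂(A_0,…,A_k)` of `∑_{v ∈ τ} d(τ \ {v})`. -/
def Cconst (X : Finset (Finset V)) (k : ℕ) (A : Fin (k + 1) → Finset V) : ℕ :=
  (Fpar X k A).sup fun τ => ∑ v ∈ τ, degPar X k A (τ.erase v)

/-- The cochain associated to a partition `A`: `σ ↦ (-1)^l·|A_l|` if `A_l` is the unique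
part disjoint from `σ`, and `0` otherwise. -/
def assocCochain {k : ℕ} (A : Fin (k + 1) → Finset V) (σ : Finset V) : ℝ :=
  if (Finset.univ.filter fun l => σ ∩ A l = ∅).card = 1 then
    ∑ l ∈ Finset.univ.filter fun l => σ ∩ A l = ∅, (-1 : ℝ) ^ (l : ℕ) * ((A l).card : ℝ)
  else 0

/-- The `Z₂`-coboundary: a `(c-1)`-cochain `f` is sent to
`τ ↦ ∑_{v ∈ τ} f (τ \ {v})`. -/
def deltaZ2 (f : Finset V → ZMod 2) (τ : Finset V) : ZMod 2 :=
  ∑ v ∈ τ, f (τ.erase v)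

/-- The support of the `Z₂`-coboundary of `f` in `X`: the faces of `X` of cardinality
`k + 1` on which the `Z₂`-coboundary of `f` is nonzero.  Its cardinality is `|δ_X f|`. -/
def suppDelta (X : Finset (Finset V)) (k : ℕ) (f : Finset V → ZMod 2) : Finset (Finset V) :=
  (faces X (k + 1)).filter fun τ => deltaZ2 f τ ≠ 0

/-- `F(A_0,…,A_{k-1})`: the `(k-1)`-faces of `X` with exactly one vertex in each of
the `k` parts. -/
def FsetLow (X : Finset (Finset V)) (k : ℕ) (A : Fin k → Finset V) : Finset (Finset V) :=
  (faces X k).filter fun σ => ∀ i, (σ ∩ A i).card = 1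

/-- The Cheeger-type constant `h'(X)`. -/
noncomputable def cheeger' (X : Finset (Finset V)) (k : ℕ) : EReal :=
  sInf {r : EReal | ∃ (A : Fin k → Finset V) (f : Finset V → ZMod 2),
    IsPartition A ∧ (∀ σ, f σ ≠ 0 → σ ∈ FsetLow X k A) ∧
    r = if (suppDelta (completion X k) k f).card = 0 then (⊤ : EReal)
        else (((Fintype.card V * (suppDelta X k f).card : ℝ) /
              ((suppDelta (completion X k) k f).card : ℝ) : ℝ) : EReal)}

/-- The Hamming norm of a `Z₂`-cochain on the faces of cardinality `c`. -/
def hamming (X : Finset (Finset V)) (c : ℕ) (f : Finset V → ZMod 2) : ℕ :=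
  ((faces X c).filter fun σ => f σ ≠ 0).card

/-- `|[f]|`: the minimum Hamming norm of `f + δ_X g` over `g ∈ C^{k-2}(X;Z₂)`. -/
noncomputable def normClass (X : Finset (Finset V)) (k : ℕ) (f : Finset V → ZMod 2) : ℕ :=
  sInf {m : ℕ | ∃ g : Finset V → ZMod 2, m = hamming X k fun σ => f σ + deltaZ2 g σ}

/-- The coboundary expansion `φ(X) = min_f |δ_X f| / |[f]|` (quotients with denominator
`0` are `∞`). -/
noncomputable def phi (X : Finset (Finset V)) (k : ℕ) : EReal :=
  sInf {r : EReal | ∃ f : Finset V → ZMod 2,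
    r = if normClass X k f = 0 then (⊤ : EReal)
        else ((((suppDelta X k f).card : ℝ) / (normClass X k f : ℝ) : ℝ) : EReal)}

/-- `h̃(X) = min_f |V|·|δ_X f| / |δ_{K(X)} f|` (quotients with denominator `0` are `∞`). -/
noncomputable def htilde (X : Finset (Finset V)) (k : ℕ) : EReal :=
  sInf {r : EReal | ∃ f : Finset V → ZMod 2,
    r = if (suppDelta (completion X k) k f).card = 0 then (⊤ : EReal)
        else (((Fintype.card V * (suppDelta X k f).card : ℝ) /
              ((suppDelta (completion X k) k f).card : ℝ) : ℝ) : EReal)}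


set_option linter.unusedSectionVars false
/-! ### Auxiliary lemmas -/

/-- The sign `(-1)^{|{w ∈ τ : w < v}|}`. -/
def eps (τ : Finset V) (v : V) : ℝ := (-1 : ℝ) ^ (τ.filter fun w => w < v).card

lemma eps_mul_self (τ : Finset V) (v : V) : eps τ v * eps τ v = 1 := by
  rw [eps, ← pow_add]
  exact Even.neg_one_pow ⟨_, rfl⟩

lemma incidence_of_not {τ σ : Finset V} (h : ¬(σ ⊆ τ ∧ σ.card + 1 = τ.card)) :
    incidence τ σ = 0 := by
  rw [incidence, if_neg h]

lemma mem_faces {X : Finset (Finset V)} {σ : Finset V} {c : ℕ} :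
    σ ∈ faces X c ↔ σ ∈ X ∧ σ.card = c := Finset.mem_filter

lemma sdiff_erase_self {τ : Finset V} {v : V} (hv : v ∈ τ) : τ \ τ.erase v = {v} := by
  ext a
  simp only [Finset.mem_sdiff, Finset.mem_erase, Finset.mem_singleton]
  constructor
  · rintro ⟨ha, h⟩
    by_contra hne
    exact h ⟨hne, ha⟩
  · rintro rfl
    exact ⟨hv, fun h => h.1 rfl⟩

lemma incidence_erase {τ : Finset V} {v : V} (hv : v ∈ τ) :
    incidence τ (τ.erase v) = eps τ v := by
  rw [incidence, if_pos ⟨Finset.erase_subset _ _, Finset.card_erase_add_one hv⟩,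
    sdiff_erase_self hv, Finset.sum_singleton]
  rfl

lemma exists_erase {σ τ : Finset V} (hsub : σ ⊆ τ) (hc : σ.card + 1 = τ.card) :
    ∃ v ∈ τ, v ∉ σ ∧ σ = τ.erase v := by
  have h1 : (τ \ σ).card = 1 := by
    rw [Finset.card_sdiff_of_subset hsub]; omega
  obtain ⟨v, hv⟩ := Finset.card_eq_one.mp h1
  have hvτ : v ∈ τ ∧ v ∉ σ := by
    have := hv ▸ Finset.mem_singleton_self v
    simpa [Finset.mem_sdiff] using this
  refine ⟨v, hvτ.1, hvτ.2, ?_⟩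
  apply Finset.eq_of_subset_of_card_le
  · exact Finset.subset_erase.mpr ⟨hsub, hvτ.2⟩
  · rw [Finset.card_erase_of_mem hvτ.1]; omega

lemma eps_anticomm {τ : Finset V} {v w : V} (hv : v ∈ τ) (hw : w ∈ τ) (hvw : v ≠ w) :
    eps τ v * eps (τ.erase v) w = -(eps τ w * eps (τ.erase w) v) := by
  have key : ∀ x y, x ∈ τ → y ∈ τ → x < y →
      eps τ x * eps (τ.erase x) y = -(eps τ y * eps (τ.erase y) x) := by
    intro x y hx hy hxy
    have h1 : (τ.erase x).filter (fun w => w < y) = (τ.filter fun w => w < y).erase x := by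
      ext a
      simp only [Finset.mem_filter, Finset.mem_erase]
      tauto
    have h2 : (τ.erase y).filter (fun w => w < x) = τ.filter fun w => w < x := by
      ext a
      simp only [Finset.mem_filter, Finset.mem_erase]
      constructor
      · tauto
      · rintro ⟨ha, hax⟩
        exact ⟨⟨fun h => absurd (h ▸ hax) (not_lt.mpr hxy.le), ha⟩, hax⟩
    have hxmem : x ∈ τ.filter fun w => w < y := Finset.mem_filter.mpr ⟨hx, hxy⟩
    rw [eps, eps, eps, eps, h1, h2, Finset.card_erase_of_mem hxmem]
    obtain ⟨c, hc⟩ : ∃ c, (τ.filter fun w => w < y).card = c + 1 :=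
      ⟨(τ.filter fun w => w < y).card - 1,
        (Nat.succ_pred_eq_of_pos (Finset.card_pos.mpr ⟨x, hxmem⟩)).symm⟩
    rw [hc]
    simp only [Nat.add_sub_cancel, pow_succ]
    ring
  rcases hvw.lt_or_gt with h | h
  · exact key v w hv hw h
  · rw [key w v hw hv h]; ring

lemma completion_isComplex {X : Finset (Finset V)} {k : ℕ} (hX : IsComplex X) :
    IsComplex (completion X k) := by
  intro σ hσ τ hτ
  rw [completion, Finset.mem_union] at hσ ⊢
  rcases hσ with hσ | hσ
  · exact Or.inl (hX σ hσ τ hτ)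
  · rw [Finset.mem_filter] at hσ
    rcases eq_or_ssubset_of_subset hτ with rfl | hss
    · right; rw [Finset.mem_filter]; exact ⟨Finset.mem_univ _, hσ.2⟩
    · obtain ⟨v, hvσ, hvτ⟩ := Finset.exists_of_ssubset hss
      left
      exact hX _ (hσ.2.2 v hvσ) τ (Finset.subset_erase.mpr ⟨hss.subset, hvτ⟩)

lemma completeComplex_isComplex (k : ℕ) : IsComplex (completeComplex V k) := by
  intro σ hσ τ hτ
  rw [completeComplex, Finset.mem_filter] at hσ ⊢
  exact ⟨Finset.mem_univ _, le_trans (Finset.card_le_card hτ) hσ.2⟩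

lemma faces_completion {X : Finset (Finset V)} {k c : ℕ} (h : c ≤ k) :
    faces (completion X k) c = faces X c := by
  ext σ
  rw [mem_faces, mem_faces, completion, Finset.mem_union, Finset.mem_filter]
  constructor
  · rintro ⟨hσ | hσ, hc⟩
    · exact ⟨hσ, hc⟩
    · omega
  · rintro ⟨hσ, hc⟩
    exact ⟨Or.inl hσ, hc⟩

lemma mem_faces_complete {σ : Finset V} {k c : ℕ} (h : c ≤ k + 1) :
    σ ∈ faces (completeComplex V k) c ↔ σ.card = c := by
  rw [mem_faces, completeComplex, Finset.mem_filter]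
  constructor
  · exact fun h => h.2
  · intro hc; exact ⟨⟨Finset.mem_univ _, by omega⟩, hc⟩

lemma faces_subset_complete {X : Finset (Finset V)} {k c : ℕ} (hdim : ∀ σ ∈ X, σ.card ≤ k + 1)
    (h : c ≤ k + 1) : faces X c ⊆ faces (completeComplex V k) c := by
  intro σ hσ
  rw [mem_faces] at hσ
  exact (mem_faces_complete h).mpr hσ.2

lemma faces_completion_subset {X : Finset (Finset V)} {k : ℕ}
    (hdim : ∀ σ ∈ X, σ.card ≤ k + 1) :
    faces (completion X k) (k + 1) ⊆ faces (completeComplex V k) (k + 1) := by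
  intro τ hτ
  rw [mem_faces] at hτ
  exact (mem_faces_complete le_rfl).mpr hτ.2

/-- The key cancellation: `∑_σ [τ:σ][σ:ρ] = 0`. -/
lemma sum_incidence_mul {Y : Finset (Finset V)} (hY : IsComplex Y) {τ ρ : Finset V}
    (hτ : τ ∈ Y) (hcard : ρ.card + 2 = τ.card) :
    ∑ σ ∈ faces Y (ρ.card + 1), incidence τ σ * incidence σ ρ = 0 := by
  by_cases hρτ : ρ ⊆ τ
  · -- τ \ ρ = {u, w}
    have h2 : (τ \ ρ).card = 2 := by rw [Finset.card_sdiff_of_subset hρτ]; omega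
    obtain ⟨u, w, huw, huv⟩ := Finset.card_eq_two.mp h2
    have humem : u ∈ τ ∧ u ∉ ρ := by
      have : u ∈ τ \ ρ := huv ▸ Finset.mem_insert_self u {w}
      simpa [Finset.mem_sdiff] using this
    have hwmem : w ∈ τ ∧ w ∉ ρ := by
      have : w ∈ τ \ ρ := huv ▸ (Finset.mem_insert_of_mem (Finset.mem_singleton_self w))
      simpa [Finset.mem_sdiff] using this
    have herase : ∀ x ∈ τ, τ.erase x ∈ faces Y (ρ.card + 1) := by
      intro x hx
      rw [mem_faces]
      refine ⟨hY τ hτ _ (Finset.erase_subset _ _), ?_⟩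
      rw [Finset.card_erase_of_mem hx]; omega
    have hne : τ.erase u ≠ τ.erase w := by
      intro h
      have : w ∈ τ.erase u := Finset.mem_erase.mpr ⟨(Ne.symm huw), hwmem.1⟩
      rw [h] at this
      exact (Finset.mem_erase.mp this).1 rfl
    have hpair : {τ.erase u, τ.erase w} ⊆ faces Y (ρ.card + 1) := by
      intro x hx
      rcases Finset.mem_insert.mp hx with rfl | hx
      · exact herase u humem.1
      · rw [Finset.mem_singleton.mp hx]; exact herase w hwmem.1
    rw [← Finset.sum_subset hpair]
    · -- the two remaining terms cancel
      have hρu : ρ ⊆ τ.erase u := Finset.subset_erase.mpr ⟨hρτ, humem.2⟩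
      have hρw : ρ ⊆ τ.erase w := Finset.subset_erase.mpr ⟨hρτ, hwmem.2⟩
      have hwu : w ∈ τ.erase u := Finset.mem_erase.mpr ⟨Ne.symm huw, hwmem.1⟩
      have huw' : u ∈ τ.erase w := Finset.mem_erase.mpr ⟨huw, humem.1⟩
      have e1 : (τ.erase u).erase w = ρ := by
        refine (Finset.eq_of_subset_of_card_le (Finset.subset_erase.mpr ⟨hρu, hwmem.2⟩) ?_).symm
        rw [Finset.card_erase_of_mem hwu, Finset.card_erase_of_mem humem.1]; omega
      have e2 : (τ.erase w).erase u = ρ := by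
        refine (Finset.eq_of_subset_of_card_le (Finset.subset_erase.mpr ⟨hρw, humem.2⟩) ?_).symm
        rw [Finset.card_erase_of_mem huw', Finset.card_erase_of_mem hwmem.1]; omega
      have i1 : incidence (τ.erase u) ρ = eps (τ.erase u) w := by
        rw [← e1, incidence_erase hwu]
      have i2 : incidence (τ.erase w) ρ = eps (τ.erase w) u := by
        rw [← e2, incidence_erase huw']
      rw [Finset.sum_pair hne, incidence_erase humem.1, incidence_erase hwmem.1, i1, i2,
        eps_anticomm humem.1 hwmem.1 huw]
      ring
    · -- the other terms vanish
      intro σ hσ hσpair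
      rcases eq_or_ne (incidence τ σ) 0 with h0 | h0
      · rw [h0, zero_mul]
      rcases eq_or_ne (incidence σ ρ) 0 with h0' | h0'
      · rw [h0', mul_zero]
      exfalso
      have hc1 : σ ⊆ τ ∧ σ.card + 1 = τ.card := by
        by_contra h; exact h0 (incidence_of_not h)
      have hc2 : ρ ⊆ σ ∧ ρ.card + 1 = σ.card := by
        by_contra h; exact h0' (incidence_of_not h)
      obtain ⟨v, hvτ, hvσ, rfl⟩ := exists_erase hc1.1 hc1.2
      have hvρ : v ∉ ρ := fun h => hvσ (hc2.1 h)
      have : v ∈ τ \ ρ := Finset.mem_sdiff.mpr ⟨hvτ, hvρ⟩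
      rw [huv] at this
      rcases Finset.mem_insert.mp this with rfl | h
      · exact hσpair (Finset.mem_insert_self _ _)
      · have hvw : v = w := Finset.mem_singleton.mp h
        subst hvw
        exact hσpair (Finset.mem_insert_of_mem (Finset.mem_singleton_self _))
  · -- all terms vanish
    apply Finset.sum_eq_zero
    intro σ hσ
    rcases eq_or_ne (incidence τ σ) 0 with h0 | h0
    · rw [h0, zero_mul]
    rcases eq_or_ne (incidence σ ρ) 0 with h0' | h0'
    · rw [h0', mul_zero]
    exfalso
    have hc1 : σ ⊆ τ ∧ σ.card + 1 = τ.card := by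
      by_contra h; exact h0 (incidence_of_not h)
    have hc2 : ρ ⊆ σ ∧ ρ.card + 1 = σ.card := by
      by_contra h; exact h0' (incidence_of_not h)
    exact hρτ (hc2.1.trans hc1.1)

set_option linter.unusedVariables false

lemma delta_delta {Y : Finset (Finset V)} (hY : IsComplex Y) {k : ℕ} (g : Finset V → ℝ)
    {τ : Finset V} (hτ : τ ∈ Y) (hcard : τ.card = k + 1) :
    delta Y k (delta Y (k - 1) g) τ = 0 := by
  rw [delta]
  have expand : ∀ σ ∈ faces Y k,
      incidence τ σ * delta Y (k - 1) g σ =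
        ∑ ρ ∈ faces Y (k - 1), (incidence τ σ * incidence σ ρ) * g ρ := by
    intro σ hσ
    rw [delta, Finset.mul_sum]
    exact Finset.sum_congr rfl fun ρ _ => by ring
  rw [Finset.sum_congr rfl expand, Finset.sum_comm]
  apply Finset.sum_eq_zero
  intro ρ hρ
  rw [← Finset.sum_mul]
  rcases Nat.eq_zero_or_pos k with rfl | hk
  · -- k = 0 : every `incidence σ ρ` vanishes since `σ.card = 0`
    have : ∀ σ ∈ faces Y 0, incidence τ σ * incidence σ ρ = 0 := by
      intro σ hσ
      have hσc : σ.card = 0 := (mem_faces.mp hσ).2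
      rw [incidence_of_not (σ := ρ) (by omega), mul_zero]
    rw [Finset.sum_eq_zero this, zero_mul]
  · have hρc : ρ.card = k - 1 := (mem_faces.mp hρ).2
    have h1 : k - 1 + 1 = k := by omega
    have h2 : ρ.card + 2 = τ.card := by omega
    have := sum_incidence_mul hY hτ h2
    rw [hρc, h1] at this
    rw [this, zero_mul]

lemma delta_congr {Y : Finset (Finset V)} {c : ℕ} {f g : Finset V → ℝ}
    (h : ∀ σ ∈ faces Y c, f σ = g σ) (τ : Finset V) : delta Y c f τ = delta Y c g τ :=
  Finset.sum_congr rfl fun σ hσ => by rw [h σ hσ]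

lemma delta_add (Y : Finset (Finset V)) (c : ℕ) (f g : Finset V → ℝ) (τ : Finset V) :
    delta Y c (fun σ => f σ + g σ) τ = delta Y c f τ + delta Y c g τ := by
  rw [delta, delta, delta, ← Finset.sum_add_distrib]
  exact Finset.sum_congr rfl fun σ _ => by ring

lemma inn_lapUp_eq (Y : Finset (Finset V)) (c : ℕ) (f : Finset V → ℝ) :
    inn Y c (lapUp Y c f) f = ∑ τ ∈ faces Y (c + 1), (delta Y c f τ) ^ 2 := by
  rw [inn, lapUp]
  have expand : ∀ σ ∈ faces Y c,
      bdry Y (c + 1) (delta Y c f) σ * f σ =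
        ∑ τ ∈ faces Y (c + 1), delta Y c f τ * (incidence τ σ * f σ) := by
    intro σ hσ
    rw [bdry, Finset.sum_mul]
    exact Finset.sum_congr rfl fun τ _ => by ring
  rw [Finset.sum_congr rfl expand, Finset.sum_comm]
  refine Finset.sum_congr rfl fun τ _ => ?_
  rw [← Finset.mul_sum, ← delta, sq]

lemma incidence_cond {τ σ : Finset V} (h : incidence τ σ ≠ 0) :
    σ ⊆ τ ∧ σ.card + 1 = τ.card := by
  by_contra hc; exact h (incidence_of_not hc)

/-- The key identity on the complete complex:
`∑_τ [τ:σ][τ:σ'] + ∑_ρ [σ:ρ][σ':ρ] = n·δ_{σσ'}`. -/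
lemma key_identity {k : ℕ} {σ σ' : Finset V} (hσ : σ.card = k) (hσ' : σ'.card = k) :
    (∑ τ ∈ faces (completeComplex V k) (k + 1), incidence τ σ * incidence τ σ') +
      (∑ ρ ∈ faces (completeComplex V k) (k - 1), incidence σ ρ * incidence σ' ρ) =
    if σ = σ' then (Fintype.card V : ℝ) else 0 := by
  rcases eq_or_ne σ σ' with rfl | hne
  · rw [if_pos rfl]
    have S1 : (∑ τ ∈ faces (completeComplex V k) (k + 1), incidence τ σ * incidence τ σ) =
        ((Finset.univ \ σ).card : ℝ) := by
      rw [← Finset.sum_filter_of_ne (p := fun τ => σ ⊆ τ ∧ σ.card + 1 = τ.card)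
        (fun τ _ h => by by_contra hc; exact h (by rw [incidence_of_not hc, zero_mul]))]
      have himg : (faces (completeComplex V k) (k + 1)).filter
          (fun τ => σ ⊆ τ ∧ σ.card + 1 = τ.card) =
          (Finset.univ \ σ).image (fun u => insert u σ) := by
        ext τ
        simp only [Finset.mem_filter, Finset.mem_image, Finset.mem_sdiff, Finset.mem_univ,
          true_and]
        constructor
        · rintro ⟨hτf, hsub, hc⟩
          obtain ⟨v, hvτ, hvσ, rfl⟩ := exists_erase hsub hc
          exact ⟨v, hvσ, (Finset.insert_erase hvτ).symm ▸ rfl⟩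
        · rintro ⟨u, huσ, rfl⟩
          have hc : (insert u σ).card = k + 1 := by
            rw [Finset.card_insert_of_notMem huσ, hσ]
          exact ⟨(mem_faces_complete le_rfl).mpr hc,
            Finset.subset_insert _ _, by rw [hc, hσ]⟩
      rw [himg, Finset.sum_image (fun u hu u' hu' h => by
        have huσ : u ∉ σ := (Finset.mem_sdiff.mp hu).2
        have hu'σ : u' ∉ σ := (Finset.mem_sdiff.mp hu').2
        have : u ∈ insert u' σ := h ▸ Finset.mem_insert_self u σ
        rcases Finset.mem_insert.mp this with h' | h'
        · exact h'
        · exact absurd h' huσ)]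
      rw [Finset.card_eq_sum_ones, Nat.cast_sum]
      refine Finset.sum_congr rfl fun u hu => ?_
      have huσ : u ∉ σ := (Finset.mem_sdiff.mp hu).2
      have : incidence (insert u σ) σ = eps (insert u σ) u := by
        have h := incidence_erase (τ := insert u σ) (Finset.mem_insert_self u σ)
        rw [Finset.erase_insert huσ] at h
        exact h
      rw [this, eps_mul_self, Nat.cast_one]
    have S2 : (∑ ρ ∈ faces (completeComplex V k) (k - 1), incidence σ ρ * incidence σ ρ) =
        (σ.card : ℝ) := by
      rw [← Finset.sum_filter_of_ne (p := fun ρ => ρ ⊆ σ ∧ ρ.card + 1 = σ.card)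
        (fun ρ _ h => by by_contra hc; exact h (by rw [incidence_of_not hc, zero_mul]))]
      have himg : (faces (completeComplex V k) (k - 1)).filter
          (fun ρ => ρ ⊆ σ ∧ ρ.card + 1 = σ.card) = σ.image (fun w => σ.erase w) := by
        ext ρ
        simp only [Finset.mem_filter, Finset.mem_image]
        constructor
        · rintro ⟨hρf, hsub, hc⟩
          obtain ⟨v, hvσ, hvρ, rfl⟩ := exists_erase hsub hc
          exact ⟨v, hvσ, rfl⟩
        · rintro ⟨w, hwσ, rfl⟩
          have hc : (σ.erase w).card = k - 1 := by
            rw [Finset.card_erase_of_mem hwσ, hσ]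
          refine ⟨(mem_faces_complete (by omega)).mpr hc, Finset.erase_subset _ _,
            Finset.card_erase_add_one hwσ⟩
      rw [himg, Finset.sum_image (fun u hu u' hu' h => by
        by_contra hne'
        have h2 : u ∈ σ.erase u' := Finset.mem_erase.mpr ⟨hne', hu⟩
        rw [← h] at h2
        exact (Finset.mem_erase.mp h2).1 rfl)]
      rw [Finset.card_eq_sum_ones σ, Nat.cast_sum]
      refine Finset.sum_congr rfl fun w hw => ?_
      rw [incidence_erase hw, eps_mul_self, Nat.cast_one]
    rw [S1, S2, ← Nat.cast_add, Finset.card_sdiff_of_subset (Finset.subset_univ σ)]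
    have h1 : σ.card ≤ Finset.univ.card := Finset.card_le_univ σ
    have h2 : (Finset.univ : Finset V).card = Fintype.card V := Finset.card_univ
    norm_cast
    omega
  · rw [if_neg hne]
    have hd1 : 1 ≤ (σ \ σ').card := by
      rcases Nat.eq_zero_or_pos (σ \ σ').card with h | h
      · exfalso
        have hsub : σ ⊆ σ' := Finset.sdiff_eq_empty_iff_subset.mp (Finset.card_eq_zero.mp h)
        exact hne (Finset.eq_of_subset_of_card_le hsub (by omega))
      · exact h
    by_cases hd : (σ \ σ').card = 1
    · -- |σ \ σ'| = 1 : the two unique terms cancel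
      obtain ⟨u, hu⟩ := Finset.card_eq_one.mp hd
      have hd' : (σ' \ σ).card = 1 := by
        have h1 : (σ \ σ').card + (σ ∩ σ').card = σ.card :=
          Finset.card_sdiff_add_card_inter σ σ'
        have h2 : (σ' \ σ).card + (σ' ∩ σ).card = σ'.card :=
          Finset.card_sdiff_add_card_inter σ' σ
        have h3 : σ ∩ σ' = σ' ∩ σ := Finset.inter_comm σ σ'
        rw [h3] at h1
        omega
      obtain ⟨w, hw⟩ := Finset.card_eq_one.mp hd'
      have huσ : u ∈ σ ∧ u ∉ σ' := by
        have := hu ▸ Finset.mem_singleton_self u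
        simpa [Finset.mem_sdiff] using this
      have hwσ : w ∈ σ' ∧ w ∉ σ := by
        have := hw ▸ Finset.mem_singleton_self w
        simpa [Finset.mem_sdiff] using this
      have huw : u ≠ w := fun h => hwσ.2 (h ▸ huσ.1)
      set τ₀ := insert w σ with hτ₀
      have hτ₀c : τ₀.card = k + 1 := by
        rw [hτ₀, Finset.card_insert_of_notMem hwσ.2, hσ]
      have huτ₀ : u ∈ τ₀ := Finset.mem_insert_of_mem huσ.1
      have hwτ₀ : w ∈ τ₀ := Finset.mem_insert_self _ _
      have hστ₀ : σ = τ₀.erase w := (Finset.erase_insert hwσ.2).symm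
      have hσ'τ₀ : σ' = τ₀.erase u := by
        ext x
        simp only [hτ₀, Finset.mem_erase, Finset.mem_insert]
        constructor
        · intro hx
          refine ⟨fun h => huσ.2 (h ▸ hx), ?_⟩
          by_cases hxσ : x ∈ σ
          · exact Or.inr hxσ
          · left
            have : x ∈ σ' \ σ := Finset.mem_sdiff.mpr ⟨hx, hxσ⟩
            rw [hw] at this; exact Finset.mem_singleton.mp this
        · rintro ⟨hxu, rfl | hxσ⟩
          · exact hwσ.1
          · by_contra hxσ'
            have : x ∈ σ \ σ' := Finset.mem_sdiff.mpr ⟨hxσ, hxσ'⟩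
            rw [hu] at this
            exact hxu (Finset.mem_singleton.mp this)
      set ρ₀ := σ.erase u with hρ₀
      have hρ₀' : ρ₀ = σ'.erase w := by
        ext x
        simp only [hρ₀, Finset.mem_erase]
        constructor
        · rintro ⟨hxu, hxσ⟩
          refine ⟨fun h => hwσ.2 (h ▸ hxσ), ?_⟩
          by_contra hxσ'
          have : x ∈ σ \ σ' := Finset.mem_sdiff.mpr ⟨hxσ, hxσ'⟩
            
          rw [hu] at this
          exact hxu (Finset.mem_singleton.mp this)
        · rintro ⟨hxw, hxσ'⟩
          refine ⟨fun h => huσ.2 (h ▸ hxσ'), ?_⟩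
          by_contra hxσ
          have : x ∈ σ' \ σ := Finset.mem_sdiff.mpr ⟨hxσ', hxσ⟩
          rw [hw] at this
          exact hxw (Finset.mem_singleton.mp this)
      have S1 : (∑ τ ∈ faces (completeComplex V k) (k + 1), incidence τ σ * incidence τ σ') =
          eps τ₀ w * eps τ₀ u := by
        rw [Finset.sum_eq_single_of_mem τ₀ ((mem_faces_complete le_rfl).mpr hτ₀c)]
        · rw [hστ₀, hσ'τ₀, incidence_erase hwτ₀, incidence_erase huτ₀]
        · intro τ hτf hτne
          rcases eq_or_ne (incidence τ σ) 0 with h0 | h0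
          · rw [h0, zero_mul]
          rcases eq_or_ne (incidence τ σ') 0 with h0' | h0'
          · rw [h0', mul_zero]
          exfalso
          obtain ⟨hsub, hc⟩ := incidence_cond h0
          obtain ⟨hsub', hc'⟩ := incidence_cond h0'
          apply hτne
          refine (Finset.eq_of_subset_of_card_le ?_ (by rw [hτ₀c]; omega)).symm
          exact Finset.insert_subset (hsub' hwσ.1) hsub
      have S2 : (∑ ρ ∈ faces (completeComplex V k) (k - 1), incidence σ ρ * incidence σ' ρ) =
          eps σ u * eps σ' w := by
        have hρ₀c : ρ₀.card = k - 1 := by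
          rw [hρ₀, Finset.card_erase_of_mem huσ.1, hσ]
        rw [Finset.sum_eq_single_of_mem ρ₀ ((mem_faces_complete (by omega)).mpr hρ₀c)]
        · rw [hρ₀'] ; rw [show σ'.erase w = σ'.erase w from rfl, incidence_erase hwσ.1]
          rw [← hρ₀', hρ₀, incidence_erase huσ.1]
        · intro ρ hρf hρne
          rcases eq_or_ne (incidence σ ρ) 0 with h0 | h0
          · rw [h0, zero_mul]
          rcases eq_or_ne (incidence σ' ρ) 0 with h0' | h0'
          · rw [h0', mul_zero]
          exfalso
          obtain ⟨hsub, hc⟩ := incidence_cond h0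
          obtain ⟨hsub', hc'⟩ := incidence_cond h0'
          apply hρne
          refine Finset.eq_of_subset_of_card_le (Finset.subset_erase.mpr
            ⟨hsub, fun h => huσ.2 (hsub' h)⟩) ?_
          rw [hρ₀c]
          omega
      rw [S1, S2]
      have h := eps_anticomm huτ₀ hwτ₀ huw
      rw [← hσ'τ₀, ← hστ₀] at h
      have hB := eps_mul_self τ₀ w
      have hD := eps_mul_self σ' w
      linear_combination (eps τ₀ w * eps σ' w) * h + (-(eps σ u * eps σ' w)) * hB +
        (-(eps τ₀ u * eps τ₀ w)) * hD
    · -- |σ \ σ'| ≥ 2 : all terms vanish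
      have hd2 : 2 ≤ (σ \ σ').card := by omega
      have Z1 : (∑ τ ∈ faces (completeComplex V k) (k + 1), incidence τ σ * incidence τ σ') =
          0 := by
        apply Finset.sum_eq_zero
        intro τ hτ
        rcases eq_or_ne (incidence τ σ) 0 with h0 | h0
        · rw [h0, zero_mul]
        rcases eq_or_ne (incidence τ σ') 0 with h0' | h0'
        · rw [h0', mul_zero]
        exfalso
        obtain ⟨hsub, hc⟩ := incidence_cond h0
        obtain ⟨hsub', hc'⟩ := incidence_cond h0'
        have h1 : σ \ σ' ⊆ τ \ σ' := Finset.sdiff_subset_sdiff hsub le_rfl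
        have h2 : (τ \ σ').card = 1 := by rw [Finset.card_sdiff_of_subset hsub']; omega
        have := Finset.card_le_card h1
        omega
      have Z2 : (∑ ρ ∈ faces (completeComplex V k) (k - 1), incidence σ ρ * incidence σ' ρ) =
          0 := by
        apply Finset.sum_eq_zero
        intro ρ hρ
        rcases eq_or_ne (incidence σ ρ) 0 with h0 | h0
        · rw [h0, zero_mul]
        rcases eq_or_ne (incidence σ' ρ) 0 with h0' | h0'
        · rw [h0', mul_zero]
        exfalso
        obtain ⟨hsub, hc⟩ := incidence_cond h0
        obtain ⟨hsub', hc'⟩ := incidence_cond h0'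
        have h1 : σ \ σ' ⊆ σ \ ρ := Finset.sdiff_subset_sdiff le_rfl hsub'
        have h2 : (σ \ ρ).card = 1 := by rw [Finset.card_sdiff_of_subset hsub]; omega
        have := Finset.card_le_card h1
        omega
      rw [Z1, Z2, add_zero]

/-- On the complete complex, `L^up + L^down = n · id`. -/
lemma lapUp_add_lapDown {k : ℕ} (z : Finset V → ℝ) {σ : Finset V} (hσ : σ.card = k) :
    lapUp (completeComplex V k) k z σ + lapDown (completeComplex V k) k z σ =
      (Fintype.card V : ℝ) * z σ := by
  set Y := completeComplex V k with hY
  have e1 : lapUp Y k z σ =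
      ∑ σ' ∈ faces Y k, (∑ τ ∈ faces Y (k + 1), incidence τ σ * incidence τ σ') * z σ' := by
    rw [lapUp, bdry]
    have expand : ∀ τ ∈ faces Y (k + 1),
        incidence τ σ * delta Y k z τ =
          ∑ σ' ∈ faces Y k, (incidence τ σ * incidence τ σ') * z σ' := by
      intro τ _
      rw [delta, Finset.mul_sum]
      exact Finset.sum_congr rfl fun σ' _ => by ring
    rw [Finset.sum_congr rfl expand, Finset.sum_comm]
    exact Finset.sum_congr rfl fun σ' _ => by rw [Finset.sum_mul]
  have e2 : lapDown Y k z σ =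
      ∑ σ' ∈ faces Y k, (∑ ρ ∈ faces Y (k - 1), incidence σ ρ * incidence σ' ρ) * z σ' := by
    rw [lapDown, delta]
    have expand : ∀ ρ ∈ faces Y (k - 1),
        incidence σ ρ * bdry Y k z ρ =
          ∑ σ' ∈ faces Y k, (incidence σ ρ * incidence σ' ρ) * z σ' := by
      intro ρ _
      rw [bdry, Finset.mul_sum]
      exact Finset.sum_congr rfl fun σ' _ => by ring
    rw [Finset.sum_congr rfl expand, Finset.sum_comm]
    exact Finset.sum_congr rfl fun σ' _ => by rw [Finset.sum_mul]
  rw [e1, e2, ← Finset.sum_add_distrib]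
  have expand : ∀ σ' ∈ faces Y k,
      (∑ τ ∈ faces Y (k + 1), incidence τ σ * incidence τ σ') * z σ' +
        (∑ ρ ∈ faces Y (k - 1), incidence σ ρ * incidence σ' ρ) * z σ' =
      (if σ = σ' then (Fintype.card V : ℝ) else 0) * z σ' := by
    intro σ' hσ'
    rw [← add_mul, key_identity hσ ((mem_faces_complete (by omega)).mp hσ')]
  rw [Finset.sum_congr rfl expand]
  rw [Finset.sum_eq_single_of_mem σ ((mem_faces_complete (by omega)).mpr hσ)]
  · rw [if_pos rfl]
  · intro σ' _ hne
    rw [if_neg (Ne.symm hne), zero_mul]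

/-- Orthogonal decomposition: every cochain is a coboundary plus a cycle. -/
lemma exists_cycle_decomp (X : Finset (Finset V)) (hX : IsComplex X) (k : ℕ)
    (f : Finset V → ℝ) :
    ∃ (z : Finset V → ℝ) (g : Finset V → ℝ),
      (∀ σ ∈ faces X k, f σ = z σ + delta X (k - 1) g σ) ∧
      (∀ σ, σ ∉ faces X k → z σ = 0) ∧ IsCycle X k z := by
  classical
  set E := EuclideanSpace ℝ {σ // σ ∈ faces X k} with hE
  let L : (Finset V → ℝ) →ₗ[ℝ] E :=
    { toFun := fun g => (WithLp.toLp 2 (fun σ : {σ // σ ∈ faces X k} => delta X (k - 1) g σ.1) : E)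
      map_add' := by
        intro a b
        ext σ
        show delta X (k-1) (fun ρ => a ρ + b ρ) σ.1 = _
        rw [delta_add]
        rfl
      map_smul' := by
        intro c a
        ext σ
        show delta X (k-1) (fun ρ => c * a ρ) σ.1 = c * delta X (k-1) a σ.1
        rw [delta, delta, Finset.mul_sum]
        exact Finset.sum_congr rfl fun ρ _ => by ring }
  set K : Submodule ℝ E := LinearMap.range L with hK
  have fE : E := (WithLp.toLp 2 (fun σ : {σ // σ ∈ faces X k} => f σ.1) : E)
  obtain ⟨y, hy, z', hz', hdecomp⟩ := K.exists_add_mem_mem_orthogonal (WithLp.toLp 2 (fun σ : {σ // σ ∈ faces X k} => f σ.1) : E)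
  obtain ⟨g, hg⟩ := hy
  refine ⟨fun σ => if h : σ ∈ faces X k then z' ⟨σ, h⟩ else 0, g, ?_, ?_, ?_⟩
  · intro σ hσ
    show f σ = (if h : σ ∈ faces X k then z' ⟨σ, h⟩ else 0) + delta X (k - 1) g σ
    rw [dif_pos hσ]
    have h2 : f σ = y ⟨σ, hσ⟩ + z' ⟨σ, hσ⟩ := congrArg (fun v : E => v ⟨σ, hσ⟩) hdecomp
    have hgσ : y ⟨σ, hσ⟩ = delta X (k - 1) g σ := by rw [← hg]; rfl
    rw [h2, hgσ]; ring
  · intro σ hσ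
    show (if h : σ ∈ faces X k then z' ⟨σ, h⟩ else 0) = 0
    rw [dif_neg hσ]
  · -- the cycle condition
    intro ρ
    by_cases hρ : ρ ∈ faces X (k - 1) ∧ 0 < k
    · -- use orthogonality against the indicator cochain of ρ
      set g₀ : Finset V → ℝ := fun ρ' => if ρ' = ρ then 1 else 0 with hg₀
      have hLg₀ : ∀ σ : {σ // σ ∈ faces X k}, L g₀ σ = incidence σ.1 ρ := by
        intro σ
        show delta X (k - 1) g₀ σ.1 = incidence σ.1 ρ
        rw [delta, Finset.sum_eq_single_of_mem ρ hρ.1]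
        · rw [hg₀]; simp
        · intro ρ' _ hne
          rw [hg₀]; simp [hne]
      have horth := hz' (L g₀) (LinearMap.mem_range_self L g₀)
      rw [PiLp.inner_apply] at horth
      have : ∑ σ : {σ // σ ∈ faces X k}, incidence σ.1 ρ * z' σ = 0 := by
        rw [← horth]
        refine Finset.sum_congr rfl fun σ _ => ?_
        rw [hLg₀ σ]
        simp [mul_comm]
      rw [bdry, ← Finset.sum_attach (faces X k) (fun τ => incidence τ ρ *
        (if h : τ ∈ faces X k then z' ⟨τ, h⟩ else 0))]
      rw [← this]
      refine Finset.sum_congr rfl fun σ _ => ?_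
      rw [dif_pos σ.2]
    · -- all terms vanish
      rw [bdry]
      apply Finset.sum_eq_zero
      intro τ hτ
      rcases eq_or_ne (incidence τ ρ) 0 with h0 | h0
      · rw [h0, zero_mul]
      exfalso
      obtain ⟨hsub, hc⟩ := incidence_cond h0
      have hτX : τ ∈ X ∧ τ.card = k := mem_faces.mp hτ
      apply hρ
      constructor
      · rw [mem_faces]
        exact ⟨hX τ hτX.1 ρ hsub, by omega⟩
      · omega
/-- **Lemma 3.2.**  Let `X` be a `k`-dimensional complex on `n` vertices with
`Z_{k-1}(X;ℝ) ≠ 0`.  Then for every `f ∈ C^{k-1}(X;ℝ)` with `f ∉ B^{k-1}(X;ℝ)`: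
`λ(X)·⟨L^up_{k-1}(K(X)) f, f⟩ ≤ n·⟨L^up_{k-1}(X) f, f⟩`. -/
theorem spectralGap_mul_lapUp_completion_le
    {V : Type*} [DecidableEq V] [Fintype V] [LinearOrder V]
    (X : Finset (Finset V)) (k : ℕ)
    (hX : IsComplex X) (hdim : IsDim X k)
    (hZ : ∃ f : Finset V → ℝ, IsCycle X k f ∧ inn X k f f ≠ 0) :
    ∀ f : Finset V → ℝ, ¬ IsCobdry X k f →
      spectralGap X k * inn (completion X k) k (lapUp (completion X k) k f) f
        ≤ (Fintype.card V : ℝ) * inn X k (lapUp X k f) f := by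
  classical
  intro f hf
  set n : ℝ := (Fintype.card V : ℝ) with hn
  have hn0 : (0 : ℝ) ≤ n := Nat.cast_nonneg _
  obtain ⟨z, g, hfz, hzsupp, hzcyc⟩ := exists_cycle_decomp X hX k f
  -- `z` is nonzero
  have hzz_nonneg : 0 ≤ inn X k z z := Finset.sum_nonneg fun σ _ => mul_self_nonneg _
  have hzz_pos : 0 < inn X k z z := by
    rcases hzz_nonneg.lt_or_eq with h | h
    · exact h
    · exfalso
      apply hf
      refine ⟨g, fun σ hσ => ?_⟩
      have hz0 : z σ = 0 := by
        have hterm := (Finset.sum_eq_zero_iff_of_nonneg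
          (fun σ _ => mul_self_nonneg (z σ))).mp h.symm σ hσ
        exact mul_self_eq_zero.mp hterm
      rw [hfz σ hσ, hz0, zero_add]
  -- the spectral gap is nonnegative, and at most the Rayleigh quotient of `z`
  have hset : ∀ r ∈ {r : ℝ | ∃ f : Finset V → ℝ, IsCycle X k f ∧ inn X k f f ≠ 0 ∧
      r = inn X k (lapUp X k f) f / inn X k f f}, 0 ≤ r := by
    rintro r ⟨f0, _, _, rfl⟩
    apply div_nonneg
    · rw [inn_lapUp_eq]
      exact Finset.sum_nonneg fun τ _ => sq_nonneg _
    · exact Finset.sum_nonneg fun σ _ => mul_self_nonneg _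
  have hgap_nonneg : 0 ≤ spectralGap X k := Real.sInf_nonneg hset
  have hgap_le : spectralGap X k ≤ inn X k (lapUp X k z) z / inn X k z z :=
    csInf_le ⟨0, hset⟩ ⟨z, hzcyc, ne_of_gt hzz_pos, rfl⟩
  have hstep : spectralGap X k * inn X k z z ≤ inn X k (lapUp X k z) z :=
    (le_div_iff₀ hzz_pos).mp hgap_le
  -- `δ_X f = δ_X z` on the `(k+1)`-faces of `X`
  have hδX : ∀ τ ∈ faces X (k + 1), delta X k f τ = delta X k z τ := by
    intro τ hτ
    obtain ⟨hτX, hτc⟩ := mem_faces.mp hτ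
    rw [delta_congr hfz τ, delta_add, delta_delta hX g hτX hτc, add_zero]
  have hRQ : inn X k (lapUp X k f) f = inn X k (lapUp X k z) z := by
    rw [inn_lapUp_eq, inn_lapUp_eq]
    exact Finset.sum_congr rfl fun τ hτ => by rw [hδX τ hτ]
  -- the completion side
  set Kc := completion X k with hKc
  set Y := completeComplex V k with hY
  have hKcomplex : IsComplex Kc := completion_isComplex hX
  have facesKk : faces Kc k = faces X k := faces_completion le_rfl
  have facesKk1 : faces Kc (k - 1) = faces X (k - 1) := faces_completion (by omega)
  have hfzK : ∀ σ ∈ faces Kc k, f σ = z σ + delta Kc (k - 1) g σ := by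
    intro σ hσ
    rw [facesKk] at hσ
    rw [hfz σ hσ, delta, delta, facesKk1]
  have hsubfaces : faces X k ⊆ faces Y k := faces_subset_complete hdim.1 (by omega)
  have hδKY : ∀ τ, delta Kc k z τ = delta Y k z τ := by
    intro τ
    rw [delta, delta, facesKk]
    exact Finset.sum_subset hsubfaces fun σ _ hσX => by rw [hzsupp σ hσX, mul_zero]
  have hδK : ∀ τ ∈ faces Kc (k + 1), delta Kc k f τ = delta Y k z τ := by
    intro τ hτ
    obtain ⟨hτK, hτc⟩ := mem_faces.mp hτ
    rw [delta_congr hfzK τ, delta_add, delta_delta hKcomplex g hτK hτc, add_zero, hδKY]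
  have hLHS : inn Kc k (lapUp Kc k f) f = ∑ τ ∈ faces Kc (k + 1), (delta Y k z τ) ^ 2 := by
    rw [inn_lapUp_eq]
    exact Finset.sum_congr rfl fun τ hτ => by rw [hδK τ hτ]
  have hle1 : ∑ τ ∈ faces Kc (k + 1), (delta Y k z τ) ^ 2 ≤
      ∑ τ ∈ faces Y (k + 1), (delta Y k z τ) ^ 2 :=
    Finset.sum_le_sum_of_subset_of_nonneg (faces_completion_subset hdim.1)
      fun τ _ _ => sq_nonneg _
  -- `∂_Y z = 0`, hence `L^down_Y z = 0`
  have hbdryY : ∀ ρ, bdry Y k z ρ = 0 := by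
    intro ρ
    have : bdry X k z ρ = bdry Y k z ρ := by
      rw [bdry, bdry]
      exact Finset.sum_subset hsubfaces fun τ _ hτX => by rw [hzsupp τ hτX, mul_zero]
    rw [← this, hzcyc ρ]
  have hlapDown : ∀ σ, lapDown Y k z σ = 0 := by
    intro σ
    rw [lapDown, delta]
    exact Finset.sum_eq_zero fun ρ _ => by rw [hbdryY ρ, mul_zero]
  have hYeq : ∑ τ ∈ faces Y (k + 1), (delta Y k z τ) ^ 2 = n * inn X k z z := by
    rw [← inn_lapUp_eq]
    have e1 : inn Y k (lapUp Y k z) z = ∑ σ ∈ faces Y k, n * z σ * z σ := by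
      rw [inn]
      refine Finset.sum_congr rfl fun σ hσ => ?_
      have hσc : σ.card = k := (mem_faces_complete (by omega)).mp hσ
      have := lapUp_add_lapDown z hσc
      rw [hlapDown σ, add_zero] at this
      rw [this]
    rw [e1]
    have e2 : ∑ σ ∈ faces X k, n * z σ * z σ = ∑ σ ∈ faces Y k, n * z σ * z σ :=
      Finset.sum_subset hsubfaces fun σ _ hσX => by rw [hzsupp σ hσX]; ring
    rw [← e2, inn, Finset.mul_sum]
    exact Finset.sum_congr rfl fun σ _ => by ring
  -- put everything together
  calc spectralGap X k * inn Kc k (lapUp Kc k f) f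
      ≤ spectralGap X k * (n * inn X k z z) := by
        apply mul_le_mul_of_nonneg_left _ hgap_nonneg
        rw [hLHS]
        exact hle1.trans_eq hYeq
    _ = n * (spectralGap X k * inn X k z z) := by ring
    _ ≤ n * inn X k (lapUp X k z) z := mul_le_mul_of_nonneg_left hstep hn0
    _ = n * inn X k (lapUp X k f) f := by rw [hRQ]

end HigherCheeger
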